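/- Let G be a group, Ψ: G → G a group homomorphism, and B: G → G a Ψ-twisted Rota-Baxter operator, i.e., B(a)B(b) = B(B(a)bΨ(B(a)^{-1})) for all a,b ∈ G. Define B₁ = B and B₂(a) = Ψ(B(a)^{-1}). Then (G, B₁, B₂) is a Rota-Baxter system of groups. -/
import Mathlib


theorem stmt_2 {G : Type*} [Group G] (Ψ : G →* G) (B : G → G)
    (hB : ∀ a b : G, B a * B b = B (B a * b * Ψ (B a)⁻¹))
    (B₁ B₂ : G → G) (hB₁ : ∀ a, B₁ a = B a) (hB₂ : ∀ a, B₂ a = Ψ (B a)⁻¹) :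
    (∀ a b : G, B₁ a * B₁ b = B₁ (B₁ a * b * B₂ a)) ∧
    (∀ a b : G, B₂ b * B₂ a = B₂ (B₁ a * b * B₂ a)) := by
  constructor
  · intro a b
    simp only [hB₁, hB₂]
    exact hB a b
  · intro a b
    simp only [hB₁, hB₂]
    rw [← hB a b, mul_inv_rev, map_mul]
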